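/- arXiv:1309.6772 — 5 statements merged into one kernel-verified Lean document; each statement's English description precedes it below -/
import Mathlib

section
/- For every integer t ≥ 1, the function x ↦ x·Q(x,t-1)/Q(x,t) is strictly increasing on (0,∞), where Q(x,y) = 1 - e^{-x}·∑_{j<y} x^j/j! is the tail probability P(Po(x) ≥ y). -/
/-- Tail probability `P(Po(x) ≥ y)` of a Poisson random variable with parameter `x`. -/
noncomputable def Q (x : ℝ) (y : ℕ) : ℝ :=
  1 - Real.exp (-x) * ∑ j ∈ Finset.range y, x ^ j / (Nat.factorial j)

private lemma exp_tsum (x : ℝ) : Real.exp x = ∑' n : ℕ, x ^ n / n.factorial := by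
  rw [Real.exp_eq_exp_ℝ, NormedSpace.exp_eq_tsum_div]

set_option maxHeartbeats 1000000 in
/-- A strict Chebyshev-type rearrangement inequality for infinite sums. -/
private lemma cheb_strict (w c d : ℕ → ℝ) (hw0 : ∀ n, 0 ≤ w n) (hwm : Monotone w)
    (hc : ∀ n, 0 < c n) (hd : ∀ n, 0 < d n)
    (hcd : ∀ i j, i ≤ j → c j * d i ≤ c i * d j)
    (hw01 : w 0 < w 1) (hcd01 : c 1 * d 0 < c 0 * d 1)
    (hwc : Summable fun n => w n * c n) (hwd : Summable fun n => w n * d n)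
    (hcs : Summable c) (hds : Summable d) :
    (∑' n, w n * c n) * (∑' n, d n) < (∑' n, w n * d n) * (∑' n, c n) := by
  have hFs : Summable (fun p : ℕ × ℕ => w p.1 * c p.1 * d p.2) :=
    hwc.mul_of_nonneg hds (fun n => mul_nonneg (hw0 n) (hc n).le) (fun n => (hd n).le)
  have hGs : Summable (fun p : ℕ × ℕ => w p.1 * d p.1 * c p.2) :=
    hwd.mul_of_nonneg hcs (fun n => mul_nonneg (hw0 n) (hd n).le) (fun n => (hc n).le)
  have hFsw : Summable (fun p : ℕ × ℕ => w p.2 * c p.2 * d p.1) := by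
    have := hFs.prod_symm
    simpa [Function.comp] using this
  have hGsw : Summable (fun p : ℕ × ℕ => w p.2 * d p.2 * c p.1) := by
    have := hGs.prod_symm
    simpa [Function.comp] using this
  have hFt : ∑' p : ℕ × ℕ, w p.1 * c p.1 * d p.2 = (∑' n, w n * c n) * (∑' n, d n) := by
    rw [Summable.tsum_prod' hFs hFs.prod_factor]
    simp_rw [tsum_mul_left]
    rw [tsum_mul_right]
  have hGt : ∑' p : ℕ × ℕ, w p.1 * d p.1 * c p.2 = (∑' n, w n * d n) * (∑' n, c n) := by
    rw [Summable.tsum_prod' hGs hGs.prod_factor]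
    simp_rw [tsum_mul_left]
    rw [tsum_mul_right]
  have hswF : ∑' p : ℕ × ℕ, w p.2 * c p.2 * d p.1 = ∑' p : ℕ × ℕ, w p.1 * c p.1 * d p.2 :=
    (Equiv.prodComm ℕ ℕ).tsum_eq (fun p : ℕ × ℕ => w p.1 * c p.1 * d p.2)
  have hswG : ∑' p : ℕ × ℕ, w p.2 * d p.2 * c p.1 = ∑' p : ℕ × ℕ, w p.1 * d p.1 * c p.2 :=
    (Equiv.prodComm ℕ ℕ).tsum_eq (fun p : ℕ × ℕ => w p.1 * d p.1 * c p.2)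
  have key : ∑' p : ℕ × ℕ, (w p.1 * c p.1 * d p.2 + w p.2 * c p.2 * d p.1)
      < ∑' p : ℕ × ℕ, (w p.1 * d p.1 * c p.2 + w p.2 * d p.2 * c p.1) := by
    refine Summable.tsum_lt_tsum (i := ((0 : ℕ), (1 : ℕ))) ?_ ?_ (hFs.add hFsw) (hGs.add hGsw)
    · intro p
      obtain ⟨i, j⟩ := p
      simp only
      rcases le_total i j with hij | hij
      · have h1 := hwm hij
        have h2 := hcd i j hij
        nlinarith [mul_nonneg (sub_nonneg.2 h1) (sub_nonneg.2 h2)]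
      · have h1 := hwm hij
        have h2 := hcd j i hij
        nlinarith [mul_nonneg (sub_nonneg.2 h1) (sub_nonneg.2 h2)]
    · simp only
      nlinarith [mul_pos (sub_pos.2 hw01) (sub_pos.2 hcd01)]
  rw [Summable.tsum_add hFs hFsw, Summable.tsum_add hGs hGsw, hswF, hswG, hFt, hGt] at key
  linarith

private lemma term_eq (t : ℕ) (ht : 1 ≤ t) (x : ℝ) (n : ℕ) :
    ((n + t : ℕ) : ℝ) * (x ^ (n + t) / (n + t).factorial)
      = x * (x ^ (n + (t - 1)) / (n + (t - 1)).factorial) := by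
  obtain ⟨s, rfl⟩ : ∃ s, t = s + 1 := ⟨t - 1, by omega⟩
  rw [show n + (s + 1 - 1) = n + s from by omega, show n + (s + 1) = (n + s) + 1 from by omega]
  rw [Nat.factorial_succ, pow_succ]
  have hfac : ((n + s).factorial : ℝ) ≠ 0 := Nat.cast_ne_zero.2 (Nat.factorial_ne_zero _)
  have hnz : ((n + s + 1 : ℕ) : ℝ) ≠ 0 := Nat.cast_ne_zero.2 (by omega)
  push_cast
  field_simp

private lemma Q_eq (x : ℝ) (k : ℕ) :
    Q x k = Real.exp (-x) * ∑' n : ℕ, x ^ (n + k) / (n + k).factorial := by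
  have hsum := Real.summable_pow_div_factorial x
  have h := Summable.sum_add_tsum_nat_add k hsum
  have hT : (∑' n : ℕ, x ^ (n + k) / (n + k).factorial)
      = Real.exp x - ∑ j ∈ Finset.range k, x ^ j / (Nat.factorial j) := by
    rw [exp_tsum]
    linarith [h]
  unfold Q
  rw [hT, mul_sub, ← Real.exp_add, neg_add_cancel, Real.exp_zero]

private lemma sumB (t : ℕ) (x : ℝ) :
    Summable (fun n : ℕ => x ^ (n + t) / (n + t).factorial) :=
  (summable_nat_add_iff t).2 (Real.summable_pow_div_factorial x)

private lemma sumA (t : ℕ) (ht : 1 ≤ t) (x : ℝ) :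
    Summable (fun n : ℕ => ((n + t : ℕ) : ℝ) * (x ^ (n + t) / (n + t).factorial)) := by
  have he : (fun n : ℕ => ((n + t : ℕ) : ℝ) * (x ^ (n + t) / (n + t).factorial))
      = fun n => x * (x ^ (n + (t - 1)) / (n + (t - 1)).factorial) := funext (term_eq t ht x)
  rw [he]
  exact ((summable_nat_add_iff (t - 1)).2 (Real.summable_pow_div_factorial x)).mul_left x

private lemma posB (t : ℕ) {x : ℝ} (hx : 0 < x) :
    0 < ∑' n : ℕ, x ^ (n + t) / (n + t).factorial :=
  Summable.tsum_pos (sumB t x) (fun n => by positivity) 0 (by positivity)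

private lemma val_eq (t : ℕ) (ht : 1 ≤ t) (x : ℝ) :
    x * Q x (t - 1) / Q x t
      = (∑' n : ℕ, ((n + t : ℕ) : ℝ) * (x ^ (n + t) / (n + t).factorial))
        / (∑' n : ℕ, x ^ (n + t) / (n + t).factorial) := by
  rw [Q_eq x (t - 1), Q_eq x t]
  have h1 : x * (Real.exp (-x) * ∑' n : ℕ, x ^ (n + (t - 1)) / (n + (t - 1)).factorial)
      = Real.exp (-x) * ∑' n : ℕ, ((n + t : ℕ) : ℝ) * (x ^ (n + t) / (n + t).factorial) := by
    have h2 : x * (∑' n : ℕ, x ^ (n + (t - 1)) / (n + (t - 1)).factorial)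
        = ∑' n : ℕ, ((n + t : ℕ) : ℝ) * (x ^ (n + t) / (n + t).factorial) := by
      rw [← tsum_mul_left]
      exact tsum_congr fun n => (term_eq t ht x n).symm
    calc x * (Real.exp (-x) * ∑' n : ℕ, x ^ (n + (t - 1)) / (n + (t - 1)).factorial)
        = Real.exp (-x) * (x * ∑' n : ℕ, x ^ (n + (t - 1)) / (n + (t - 1)).factorial) := by ring
      _ = _ := by rw [h2]
  rw [h1, mul_div_mul_left _ _ (Real.exp_ne_zero _)]

/-- For every integer `t ≥ 1`, the function `x ↦ x·Q(x,t-1)/Q(x,t)` is strictly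
increasing on `(0,∞)`. -/
theorem strictMonoOn_poisson_conditional_mean (t : ℕ) (ht : 1 ≤ t) :
    StrictMonoOn (fun x : ℝ => x * Q x (t - 1) / Q x t) (Set.Ioi 0) := by
  intro x hx y hy hxy
  simp only [Set.mem_Ioi] at hx hy
  simp only
  rw [val_eq t ht x, val_eq t ht y, div_lt_div_iff₀ (posB t hx) (posB t hy)]
  refine cheb_strict (fun n => ((n + t : ℕ) : ℝ))
      (fun n => x ^ (n + t) / (n + t).factorial)
      (fun n => y ^ (n + t) / (n + t).factorial)
      (fun n => by positivity)
      (fun i j hij => Nat.cast_le.2 (by omega))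
      (fun n => by positivity) (fun n => by positivity)
      ?_ (Nat.cast_lt.2 (by omega)) ?_
      (sumA t ht x) (sumA t ht y) (sumB t x) (sumB t y)
  · intro i j hij
    have hkey : x ^ (j + t) * y ^ (i + t) ≤ x ^ (i + t) * y ^ (j + t) := by
      rw [show x ^ (j + t) = x ^ (i + t) * x ^ (j - i) from by
          rw [← pow_add]; congr 1; omega,
        show y ^ (j + t) = y ^ (i + t) * y ^ (j - i) from by
          rw [← pow_add]; congr 1; omega]
      have hp : x ^ (j - i) ≤ y ^ (j - i) := pow_le_pow_left₀ hx.le hxy.le _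
      nlinarith [mul_nonneg (mul_nonneg (pow_pos hx (i + t)).le (pow_pos hy (i + t)).le)
        (sub_nonneg.2 hp)]
    rw [div_mul_div_comm, div_mul_div_comm,
      mul_comm (((j + t).factorial : ℝ)) (((i + t).factorial : ℝ))]
    have hden : (0 : ℝ) < ((i + t).factorial : ℝ) * ((j + t).factorial : ℝ) := by positivity
    exact (div_le_div_iff_of_pos_right hden).2 hkey
  · have hkey : x ^ (1 + t) * y ^ (0 + t) < x ^ (0 + t) * y ^ (1 + t) := by
      simp only [zero_add, pow_add, pow_one]
      nlinarith [mul_pos (mul_pos (pow_pos hx t) (pow_pos hy t)) (sub_pos.2 hxy)]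
    rw [div_mul_div_comm, div_mul_div_comm,
      mul_comm (((1 + t).factorial : ℝ)) (((0 + t).factorial : ℝ))]
    have hden : (0 : ℝ) < ((0 + t).factorial : ℝ) * ((1 + t).factorial : ℝ) := by positivity
    exact (div_lt_div_iff_of_pos_right hden).2 hkey
end

section
/- For every integer t ≥ 1 and x > 0, the inequality (1/(t-1)!)·∑_{s≥0} (s+1)·x^s/(t+s+1)! < (∑_{s≥0} x^s/(t+s)!)^2 holds. -/
open Finset

private lemma fact_step (a b : ℕ) (h : a ≤ b + 1) :
    a.factorial * b.factorial ≤ (a - 1).factorial * (b + 1).factorial := by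
  cases a with
  | zero =>
      simpa using Nat.mul_le_mul_left 1 (Nat.factorial_le (Nat.le_succ b))
  | succ a =>
      simp only [Nat.succ_sub_one, Nat.factorial_succ]
      calc (a + 1) * a.factorial * b.factorial
          ≤ (b + 1) * a.factorial * b.factorial := by
            exact Nat.mul_le_mul_right _ (Nat.mul_le_mul_right _ h)
        _ = a.factorial * ((b + 1) * b.factorial) := by ring

private lemma fact_iter (m a b : ℕ) (h : a ≤ b + 1) :
    a.factorial * b.factorial ≤ (a - m).factorial * (b + m).factorial := by
  induction m with
  | zero => simp
  | succ m ih =>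
      refine ih.trans ?_
      have := fact_step (a - m) (b + m) (by omega)
      rw [Nat.sub_sub] at this
      simpa [← Nat.add_assoc] using this

private lemma fact_key (t k j : ℕ) (ht : 1 ≤ t) :
    (t + k).factorial * (t + j).factorial ≤ (t - 1).factorial * (t + k + j + 1).factorial := by
  rcases le_total k j with h | h
  · have := fact_iter (k + 1) (t + k) (t + j) (by omega)
    have e1 : t + k - (k + 1) = t - 1 := by omega
    have e2 : t + j + (k + 1) = t + k + j + 1 := by omega
    rwa [e1, e2] at this
  · have := fact_iter (j + 1) (t + j) (t + k) (by omega)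
    have e1 : t + j - (j + 1) = t - 1 := by omega
    have e2 : t + k + (j + 1) = t + k + j + 1 := by omega
    rw [e1, e2] at this
    rwa [mul_comm] at this

private lemma fact_strict (t : ℕ) (ht : 1 ≤ t) :
    t.factorial * t.factorial < (t - 1).factorial * (t + 1).factorial := by
  have h1 : t * (t - 1).factorial = t.factorial := Nat.mul_factorial_pred (by omega)
  have hpos : 0 < (t - 1).factorial * t.factorial :=
    Nat.mul_pos (Nat.factorial_pos _) (Nat.factorial_pos _)
  calc t.factorial * t.factorial = t * ((t - 1).factorial * t.factorial) := by
        rw [← h1]; ring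
    _ < (t + 1) * ((t - 1).factorial * t.factorial) :=
        (Nat.mul_lt_mul_right hpos).mpr (Nat.lt_succ_self t)
    _ = (t - 1).factorial * ((t + 1) * t.factorial) := by ring
    _ = (t - 1).factorial * (t + 1).factorial := by rw [← Nat.factorial_succ]

/-- For every integer `t ≥ 1` and `x > 0`,
`(1/(t-1)!)·∑_{s≥0} (s+1)·x^s/(t+s+1)! < (∑_{s≥0} x^s/(t+s)!)^2`. -/
theorem power_series_inequality (t : ℕ) (ht : 1 ≤ t) (x : ℝ) (hx : 0 < x) :
    (1 / (Nat.factorial (t - 1) : ℝ)) *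
        ∑' s : ℕ, ((s : ℝ) + 1) * x ^ s / (Nat.factorial (t + s + 1) : ℝ) <
      (∑' s : ℕ, x ^ s / (Nat.factorial (t + s) : ℝ)) ^ 2 := by
  set a : ℕ → ℝ := fun s => x ^ s / (Nat.factorial (t + s) : ℝ) with ha_def
  have ha_nonneg : ∀ s, 0 ≤ a s := fun s => by positivity
  have ha_norm : Summable fun s => ‖a s‖ := by
    refine Summable.of_nonneg_of_le (fun s => norm_nonneg _) (fun s => ?_)
      (Real.summable_pow_div_factorial x)
    rw [Real.norm_eq_abs, abs_of_nonneg (ha_nonneg s)]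
    apply div_le_div_of_nonneg_left (by positivity) (by positivity)
    exact_mod_cast Nat.factorial_le (Nat.le_add_left s t)
  -- Cauchy product
  have hcauchy : (∑' s : ℕ, a s) ^ 2 =
      ∑' n : ℕ, ∑ k ∈ range (n + 1), a k * a (n - k) := by
    rw [sq]
    exact tsum_mul_tsum_eq_tsum_sum_range_of_summable_norm ha_norm ha_norm
  set f : ℕ → ℝ := fun n =>
    (1 / (Nat.factorial (t - 1) : ℝ)) * (((n : ℝ) + 1) * x ^ n / (Nat.factorial (t + n + 1) : ℝ))
    with hf_def
  have hLHS : (1 / (Nat.factorial (t - 1) : ℝ)) *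
      ∑' s : ℕ, ((s : ℝ) + 1) * x ^ s / (Nat.factorial (t + s + 1) : ℝ) = ∑' n, f n := by
    rw [tsum_mul_left]
  rw [hLHS, hcauchy]
  -- termwise comparison
  have hterm : ∀ n k : ℕ, k ≤ n →
      x ^ n / ((Nat.factorial (t - 1) : ℝ) * (Nat.factorial (t + n + 1) : ℝ))
        ≤ a k * a (n - k) := by
    intro n k hk
    have hxk : a k * a (n - k) = x ^ n /
        ((Nat.factorial (t + k) : ℝ) * (Nat.factorial (t + (n - k)) : ℝ)) := by
      rw [ha_def]
      simp only [div_mul_div_comm, ← pow_add]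
      congr 2
      omega
    rw [hxk]
    apply div_le_div_of_nonneg_left (by positivity) (by positivity)
    have := fact_key t k (n - k) ht
    have e : t + k + (n - k) + 1 = t + n + 1 := by omega
    rw [e] at this
    exact_mod_cast this
  have hle : ∀ n, f n ≤ ∑ k ∈ range (n + 1), a k * a (n - k) := by
    intro n
    have hsum : f n = ∑ _k ∈ range (n + 1),
        x ^ n / ((Nat.factorial (t - 1) : ℝ) * (Nat.factorial (t + n + 1) : ℝ)) := by
      rw [Finset.sum_const, card_range, nsmul_eq_mul, hf_def]
      push_cast
      field_simp
    rw [hsum]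
    exact Finset.sum_le_sum fun k hk => hterm n k (by simpa using Nat.lt_succ_iff.mp (mem_range.mp hk))
  have hstrict : f 0 < ∑ k ∈ range 1, a k * a (0 - k) := by
    simp only [range_one, Finset.sum_singleton, Nat.sub_zero, ha_def, hf_def]
    simp only [pow_zero, Nat.cast_zero, zero_add, mul_one, one_mul, Nat.add_zero]
    rw [show (1:ℝ) / (t.factorial:ℝ) * (1 / (t.factorial:ℝ))
        = 1 / ((t.factorial:ℝ) * (t.factorial:ℝ)) by ring,
      show (1:ℝ) / ((t-1).factorial:ℝ) * (1 / ((t+1).factorial:ℝ))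
        = 1 / (((t-1).factorial:ℝ) * ((t+1).factorial:ℝ)) by ring]
    apply one_div_lt_one_div_of_lt (by positivity)
    exact_mod_cast fact_strict t ht
  have hf_nonneg : ∀ n, 0 ≤ f n := fun n => by
    rw [hf_def]; positivity
  have hg_summable : Summable fun n => ∑ k ∈ range (n + 1), a k * a (n - k) :=
    (summable_norm_sum_mul_range_of_summable_norm ha_norm ha_norm).of_norm
  exact Summable.tsum_lt_tsum_of_nonneg hf_nonneg hle hstrict hg_summable
end

section
/- For integers k ≥ 3 and ℓ ≥ 2, let ξ* > 0 satisfy kℓ = ξ*·Q(ξ*,ℓ)/Q(ξ*,ℓ+1). Then ξ* < kℓ and ξ* > kℓ − 0.36. -/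
open Finset in
lemma Q_tail_lower (ξ : ℝ) (hξ : 0 < ξ) (y N : ℕ) :
    Real.exp (-ξ) * ∑ i ∈ Finset.range N, ξ ^ (y + i) / (Nat.factorial (y + i)) ≤ Q ξ y := by
  have h := Real.sum_le_exp_of_nonneg hξ.le (y + N)
  rw [Finset.sum_range_add] at h
  have hE : (0:ℝ) < Real.exp (-ξ) := Real.exp_pos _
  have h2 : Real.exp (-ξ) * ((∑ i ∈ range y, ξ ^ i / (Nat.factorial i)) +
      ∑ i ∈ range N, ξ ^ (y + i) / (Nat.factorial (y + i))) ≤ Real.exp (-ξ) * Real.exp ξ :=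
    mul_le_mul_of_nonneg_left h hE.le
  rw [← Real.exp_add, neg_add_cancel, Real.exp_zero] at h2
  unfold Q
  nlinarith [h2]

lemma Q_pos (ξ : ℝ) (hξ : 0 < ξ) (y : ℕ) : 0 < Q ξ y := by
  have h := Q_tail_lower ξ hξ y 1
  simp only [Finset.sum_range_one] at h
  have : 0 < Real.exp (-ξ) * (ξ ^ (y + 0) / (Nat.factorial (y + 0))) := by
    apply mul_pos (Real.exp_pos _)
    positivity
  linarith

lemma key_eq (k ℓ : ℕ) (ξ : ℝ) (hξ : 0 < ξ)
    (heq : (k : ℝ) * ℓ = ξ * Q ξ ℓ / Q ξ (ℓ + 1)) :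
    ((k : ℝ) * ℓ - ξ) * Q ξ (ℓ + 1) = Real.exp (-ξ) * ξ ^ (ℓ + 1) / Nat.factorial ℓ := by
  have hD := Q_pos ξ hξ (ℓ + 1)
  have hQl : Q ξ ℓ = Q ξ (ℓ + 1) + Real.exp (-ξ) * (ξ ^ ℓ / Nat.factorial ℓ) := by
    unfold Q
    rw [Finset.sum_range_succ]
    ring
  rw [eq_div_iff hD.ne'] at heq
  rw [hQl] at heq
  rw [pow_succ]
  linear_combination heq

lemma xi_lt (k ℓ : ℕ) (ξ : ℝ) (hξ : 0 < ξ)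
    (heq : (k : ℝ) * ℓ = ξ * Q ξ ℓ / Q ξ (ℓ + 1)) : ξ < (k : ℝ) * ℓ := by
  have hD := Q_pos ξ hξ (ℓ + 1)
  have h := key_eq k ℓ ξ hξ heq
  have hE : (0:ℝ) < Real.exp (-ξ) * ξ ^ (ℓ + 1) / Nat.factorial ℓ := by positivity
  nlinarith [h, hD, hE]

open Finset in
lemma bound (k ℓ N : ℕ) (ξ r : ℝ) (hξ : 0 < ξ) (hr : 0 < r)
    (heq : (k : ℝ) * ℓ = ξ * Q ξ ℓ / Q ξ (ℓ + 1))
    (h : r / (Nat.factorial ℓ) ≤ ∑ i ∈ Finset.range N, ξ ^ i / (Nat.factorial (ℓ + 1 + i))) :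
    (k : ℝ) * ℓ - ξ ≤ 1 / r := by
  have hD := Q_pos ξ hξ (ℓ + 1)
  have hkey := key_eq k ℓ ξ hξ heq
  have htail := Q_tail_lower ξ hξ (ℓ + 1) N
  have hfac : ∑ i ∈ range N, ξ ^ (ℓ + 1 + i) / (Nat.factorial (ℓ + 1 + i))
      = ξ ^ (ℓ + 1) * ∑ i ∈ range N, ξ ^ i / (Nat.factorial (ℓ + 1 + i)) := by
    rw [Finset.mul_sum]
    refine Finset.sum_congr rfl fun i _ => ?_
    rw [pow_add]
    ring
  rw [hfac] at htail
  have hpos : (0:ℝ) < Real.exp (-ξ) * ξ ^ (ℓ + 1) := by positivity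
  have hgt : (k : ℝ) * ℓ - ξ > 0 := sub_pos.mpr (xi_lt k ℓ ξ hξ heq)
  -- D ≥ exp(-ξ) ξ^{ℓ+1} (r/ℓ!)
  have hD2 : Real.exp (-ξ) * ξ ^ (ℓ + 1) * (r / Nat.factorial ℓ) ≤ Q ξ (ℓ + 1) := by
    calc Real.exp (-ξ) * ξ ^ (ℓ + 1) * (r / Nat.factorial ℓ)
        ≤ Real.exp (-ξ) * ξ ^ (ℓ + 1) * (∑ i ∈ range N, ξ ^ i / (Nat.factorial (ℓ + 1 + i))) := by
          apply mul_le_mul_of_nonneg_left h hpos.le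
      _ = Real.exp (-ξ) * (ξ ^ (ℓ + 1) * ∑ i ∈ range N, ξ ^ i / (Nat.factorial (ℓ + 1 + i))) := by ring
      _ ≤ Q ξ (ℓ + 1) := htail
  -- (kℓ-ξ) * [exp(-ξ)ξ^{ℓ+1} r/ℓ!] ≤ (kℓ-ξ)*D = exp(-ξ)ξ^{ℓ+1}/ℓ!
  have h3 : ((k : ℝ) * ℓ - ξ) * (Real.exp (-ξ) * ξ ^ (ℓ + 1) * (r / Nat.factorial ℓ))
      ≤ Real.exp (-ξ) * ξ ^ (ℓ + 1) / Nat.factorial ℓ := by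
    rw [← hkey]
    exact mul_le_mul_of_nonneg_left hD2 hgt.le
  have hf : (0:ℝ) < (Nat.factorial ℓ : ℝ) := by positivity
  rw [le_div_iff₀ hr]
  have := h3
  field_simp at this
  nlinarith [this, hpos, hf, hgt, mul_pos hpos hf]

open Finset in
lemma stage (k ℓ N : ℕ) (ξ r a : ℝ) (hξ : 0 < ξ) (ha : 0 ≤ a) (haξ : a ≤ ξ) (hr : 0 < r)
    (heq : (k : ℝ) * ℓ = ξ * Q ξ ℓ / Q ξ (ℓ + 1))
    (h : r / (Nat.factorial ℓ) ≤ ∑ i ∈ Finset.range N, a ^ i / (Nat.factorial (ℓ + 1 + i))) :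
    (k : ℝ) * ℓ - ξ ≤ 1 / r := by
  apply bound k ℓ N ξ r hξ hr heq
  refine h.trans (Finset.sum_le_sum fun i _ => ?_)
  gcongr

lemma bern (a : ℝ) (ha : 0 ≤ a) : ∀ j : ℕ, a ^ (j+1) + 2*((j:ℝ)+1)*a^j ≤ (a+2)^(j+1) := by
  intro j
  induction j with
  | zero => norm_num
  | succ n ih =>
    have h2 : (0:ℝ) ≤ a + 2 := by linarith
    have hpn : (0:ℝ) ≤ a ^ n := pow_nonneg ha n
    push_cast
    calc a ^ (n+1+1) + 2*((n:ℝ)+1+1)*a^(n+1)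
        ≤ (a+2) * (a^(n+1) + 2*((n:ℝ)+1)*a^n) := by ring_nf; nlinarith [hpn, mul_nonneg hpn ha]
      _ ≤ (a+2) * (a+2)^(n+1) := mul_le_mul_of_nonneg_left ih h2
      _ = (a+2)^(n+1+1) := by ring

lemma step_ineq (j : ℕ) : 2*(2*j+9)*(2*j+5)^(j+3) ≤ (2*j+7)^(j+4) := by
  have hb := bern (2*(j:ℝ)+5) (by positivity) j
  set a : ℝ := 2*(j:ℝ)+5 with ha
  have hj0 : (0:ℝ) ≤ (j:ℝ) := Nat.cast_nonneg j
  have ha5 : (5:ℝ) ≤ a := by rw [ha]; linarith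
  have h5 : (0:ℝ) ≤ a - 5 := by linarith
  have hpj : (0:ℝ) ≤ a ^ j := by positivity
  have hbr : (0:ℝ) ≤ (a+2)^3*(2*a-3) - 2*(a+4)*a^3 := by
    nlinarith [mul_nonneg (mul_nonneg h5 h5) h5, mul_nonneg h5 h5, h5]
  have key : 2*(a+4)*(a^3*a^j) ≤ (a+2)^3 * (a^(j+1) + 2*((j:ℝ)+1)*a^j) := by
    have h1 : a ^ (j+1) = a * a^j := by ring
    have h2 : 2*((j:ℝ)+1) = a - 3 := by rw [ha]; ring
    rw [h1, h2]
    nlinarith [mul_nonneg hbr hpj]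
  have main : 2*(a+4)*a^(j+3) ≤ (a+2)^(j+4) := by
    calc 2*(a+4)*a^(j+3) = 2*(a+4)*(a^3*a^j) := by ring
      _ ≤ (a+2)^3 * (a^(j+1) + 2*((j:ℝ)+1)*a^j) := key
      _ ≤ (a+2)^3 * (a+2)^(j+1) := mul_le_mul_of_nonneg_left hb (by positivity)
      _ = (a+2)^(j+4) := by ring
  have hcast : ((2*(2*j+9)*(2*j+5)^(j+3) : ℕ) : ℝ) ≤ (((2*j+7)^(j+4) : ℕ) : ℝ) := by
    push_cast
    calc (2:ℝ)*(2*(j:ℝ)+9)*(2*(j:ℝ)+5)^(j+3) = 2*(a+4)*a^(j+3) := by rw [ha]; ring_nf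
      _ ≤ (a+2)^(j+4) := main
      _ = (2*(j:ℝ)+7)^(j+4) := by rw [ha]; ring_nf
  exact_mod_cast hcast

lemma fact_bound : ∀ m : ℕ, 14 * Nat.factorial (37 + 2*m) ≤ 5 * (35 + 2*m)^(18+m) * Nat.factorial (18+m) := by
  intro m
  induction m with
  | zero => norm_num [Nat.factorial]
  | succ n ih =>
    have hstep := step_ineq (n + 15)
    have h1 : 37 + 2*(n+1) = (39 + 2*n) := by ring
    have h2 : Nat.factorial (39 + 2*n) = (39+2*n) * ((38+2*n) * Nat.factorial (37+2*n)) := by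
      rw [show 39 + 2*n = (38 + 2*n) + 1 from by ring, show 38 + 2*n = (37 + 2*n) + 1 from by ring]
      rw [Nat.factorial_succ, Nat.factorial_succ]
    have h3 : Nat.factorial (18 + (n+1)) = (19 + n) * Nat.factorial (18 + n) := by
      rw [show 18 + (n+1) = (18 + n) + 1 from by ring, Nat.factorial_succ]
      ring
    calc 14 * Nat.factorial (37 + 2*(n+1)) = (39+2*n) * ((38+2*n) * (14 * Nat.factorial (37+2*n))) := by
          rw [h1, h2]; ring
      _ ≤ (39+2*n) * ((38+2*n) * (5 * (35 + 2*n)^(18+n) * Nat.factorial (18+n))) := by gcongr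
      _ = 5 * (2*(2*(n+15)+9) * (2*(n+15)+5)^((n+15)+3)) * ((19+n) * Nat.factorial (18+n)) := by ring_nf
      _ ≤ 5 * ((2*(n+15)+7)^((n+15)+4)) * ((19+n) * Nat.factorial (18+n)) := by gcongr
      _ = 5 * (35 + 2*(n+1))^(18+(n+1)) * Nat.factorial (18+(n+1)) := by rw [h3]; ring_nf

open Finset in
lemma large_case (k m : ℕ) (hk : 3 ≤ k) (ξ : ℝ) (hξ : 0 < ξ)
    (heq : (k:ℝ)*((18+m : ℕ):ℝ) = ξ * Q ξ (18+m) / Q ξ ((18+m)+1)) :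
    (k:ℝ)*((18+m:ℕ):ℝ) - 0.36 < ξ := by
  have hk3 : (3:ℝ) ≤ (k:ℝ) := by exact_mod_cast hk
  set ℓ : ℕ := 18 + m with hℓdef
  have hcl : ((ℓ:ℕ):ℝ) = 18 + (m:ℝ) := by rw [hℓdef]; push_cast; ring
  have hb0 : (k:ℝ)*ℓ - ξ ≤ 1/(1/((ℓ:ℝ)+1)) := by
    apply stage k ℓ 1 ξ (1/((ℓ:ℝ)+1)) 0 hξ le_rfl hξ.le (by positivity) heq
    rw [Finset.sum_range_one]
    rw [show ℓ+1+0 = ℓ+1 from rfl, Nat.factorial_succ]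
    rw [pow_zero]
    push_cast
    rw [div_div]
  have hb0' : (k:ℝ)*ℓ - ξ ≤ (ℓ:ℝ)+1 := by
    rwa [one_div_one_div] at hb0
  have hkl : 3*((ℓ:ℕ):ℝ) ≤ (k:ℝ)*ℓ := mul_le_mul_of_nonneg_right hk3 (Nat.cast_nonneg ℓ)
  have hm0 : (0:ℝ) ≤ (m:ℝ) := Nat.cast_nonneg m
  have hξ2 : (35 + 2*(m:ℝ)) ≤ ξ := by rw [hcl] at hb0' hkl; linarith
  have hfb := fact_bound m
  have hc35 : ((35+2*m:ℕ):ℝ) = 35 + 2*(m:ℝ) := by push_cast; ring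
  have hsum : (14/5 : ℝ)/(Nat.factorial ℓ) ≤ ∑ i ∈ Finset.range (ℓ+1), ξ^i / (Nat.factorial (ℓ+1+i)) := by
    have hnum : (14/5:ℝ)/(Nat.factorial ℓ) ≤ ((35+2*m:ℕ):ℝ)^ℓ / (Nat.factorial (2*ℓ+1)) := by
      rw [div_le_div_iff₀ (by positivity) (by positivity)]
      have hcast : (14:ℝ) * ((Nat.factorial (37+2*m)):ℝ) ≤ 5 * ((35+2*m:ℕ):ℝ)^(18+m) * ((Nat.factorial (18+m)):ℝ) := by
        exact_mod_cast hfb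
      rw [show 2*ℓ+1 = 37+2*m from by rw [hℓdef]; ring, hℓdef]
      linarith
    have hterm : ((35+2*m:ℕ):ℝ)^ℓ / (Nat.factorial (2*ℓ+1)) ≤ ξ^ℓ / (Nat.factorial (ℓ+1+ℓ)) := by
      rw [show ℓ+1+ℓ = 2*ℓ+1 from by ring]
      gcongr <;> first
        | exact Nat.cast_nonneg _
        | (rw [hc35]; exact hξ2)
    have hsingle : ξ^ℓ / ((Nat.factorial (ℓ+1+ℓ)):ℝ) ≤ ∑ i ∈ Finset.range (ℓ+1), ξ^i / (Nat.factorial (ℓ+1+i)) := by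
      apply Finset.single_le_sum (f := fun i => ξ^i / ((Nat.factorial (ℓ+1+i)):ℝ))
        (fun i _ => by positivity) (Finset.self_mem_range_succ ℓ)
    linarith
  have hfinal := bound k ℓ (ℓ+1) ξ (14/5) hξ (by norm_num) heq hsum
  have : (1:ℝ)/(14/5) < 0.36 := by norm_num
  linarith

lemma case_2 (k : ℕ) (hk : 3 ≤ k) (ξ : ℝ) (hξ : 0 < ξ)
    (heq : (k : ℝ) * ((2:ℕ):ℝ) = ξ * Q ξ 2 / Q ξ (2+1)) :
    (k : ℝ) * ((2:ℕ):ℝ) - 0.36 < ξ := by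
  have hk3 : (3:ℝ) ≤ (k:ℝ) := by exact_mod_cast hk
  have hb0 := stage k 2 1 ξ (1/3) 0 hξ le_rfl hξ.le (by norm_num) heq (by norm_num [Finset.sum_range_succ, Nat.factorial])
  have hx1 : ((3):ℝ) ≤ ξ := by push_cast at hb0; norm_num at hb0; linarith
  have hb1 := stage k 2 5 ξ (21/25) (3) hξ (by norm_num) hx1 (by norm_num) heq (by norm_num [Finset.sum_range_succ, Nat.factorial])
  have hx2 : ((101/21):ℝ) ≤ ξ := by push_cast at hb1; norm_num at hb1; linarith
  have hb2 := stage k 2 9 ξ (47/25) (101/21) hξ (by norm_num) hx2 (by norm_num) heq (by norm_num [Finset.sum_range_succ, Nat.factorial])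
  have hx3 : ((257/47):ℝ) ≤ ξ := by push_cast at hb2; norm_num at hb2; linarith
  have hb3 := stage k 2 10 ξ (131/50) (257/47) hξ (by norm_num) hx3 (by norm_num) heq (by norm_num [Finset.sum_range_succ, Nat.factorial])
  have hx4 : ((736/131):ℝ) ≤ ξ := by push_cast at hb3; norm_num at hb3; linarith
  have hb4 := stage k 2 9 ξ (14/5) (736/131) hξ (by norm_num) hx4 (by norm_num) heq (by norm_num [Finset.sum_range_succ, Nat.factorial])
  push_cast at hb4 ⊢
  norm_num at hb4 ⊢
  linarith

lemma case_3 (k : ℕ) (hk : 3 ≤ k) (ξ : ℝ) (hξ : 0 < ξ)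
    (heq : (k : ℝ) * ((3:ℕ):ℝ) = ξ * Q ξ 3 / Q ξ (3+1)) :
    (k : ℝ) * ((3:ℕ):ℝ) - 0.36 < ξ := by
  have hk3 : (3:ℝ) ≤ (k:ℝ) := by exact_mod_cast hk
  have hb0 := stage k 3 1 ξ (1/4) 0 hξ le_rfl hξ.le (by norm_num) heq (by norm_num [Finset.sum_range_succ, Nat.factorial])
  have hx1 : ((5):ℝ) ≤ ξ := by push_cast at hb0; norm_num at hb0; linarith
  have hb1 := stage k 3 8 ξ (103/100) (5) hξ (by norm_num) hx1 (by norm_num) heq (by norm_num [Finset.sum_range_succ, Nat.factorial])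
  have hx2 : ((827/103):ℝ) ≤ ξ := by push_cast at hb1; norm_num at hb1; linarith
  have hb2 := stage k 3 6 ξ (14/5) (827/103) hξ (by norm_num) hx2 (by norm_num) heq (by norm_num [Finset.sum_range_succ, Nat.factorial])
  push_cast at hb2 ⊢
  norm_num at hb2 ⊢
  linarith

lemma case_4 (k : ℕ) (hk : 3 ≤ k) (ξ : ℝ) (hξ : 0 < ξ)
    (heq : (k : ℝ) * ((4:ℕ):ℝ) = ξ * Q ξ 4 / Q ξ (4+1)) :
    (k : ℝ) * ((4:ℕ):ℝ) - 0.36 < ξ := by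
  have hk3 : (3:ℝ) ≤ (k:ℝ) := by exact_mod_cast hk
  have hb0 := stage k 4 1 ξ (1/5) 0 hξ le_rfl hξ.le (by norm_num) heq (by norm_num [Finset.sum_range_succ, Nat.factorial])
  have hx1 : ((7):ℝ) ≤ ξ := by push_cast at hb0; norm_num at hb0; linarith
  have hb1 := stage k 4 10 ξ (32/25) (7) hξ (by norm_num) hx1 (by norm_num) heq (by norm_num [Finset.sum_range_succ, Nat.factorial])
  have hx2 : ((359/32):ℝ) ≤ ξ := by push_cast at hb1; norm_num at hb1; linarith
  have hb2 := stage k 4 5 ξ (14/5) (359/32) hξ (by norm_num) hx2 (by norm_num) heq (by norm_num [Finset.sum_range_succ, Nat.factorial])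
  push_cast at hb2 ⊢
  norm_num at hb2 ⊢
  linarith

lemma case_5 (k : ℕ) (hk : 3 ≤ k) (ξ : ℝ) (hξ : 0 < ξ)
    (heq : (k : ℝ) * ((5:ℕ):ℝ) = ξ * Q ξ 5 / Q ξ (5+1)) :
    (k : ℝ) * ((5:ℕ):ℝ) - 0.36 < ξ := by
  have hk3 : (3:ℝ) ≤ (k:ℝ) := by exact_mod_cast hk
  have hb0 := stage k 5 1 ξ (1/6) 0 hξ le_rfl hξ.le (by norm_num) heq (by norm_num [Finset.sum_range_succ, Nat.factorial])
  have hx1 : ((9):ℝ) ≤ ξ := by push_cast at hb0; norm_num at hb0; linarith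
  have hb1 := stage k 5 12 ξ (8/5) (9) hξ (by norm_num) hx1 (by norm_num) heq (by norm_num [Finset.sum_range_succ, Nat.factorial])
  have hx2 : ((115/8):ℝ) ≤ ξ := by push_cast at hb1; norm_num at hb1; linarith
  have hb2 := stage k 5 5 ξ (14/5) (115/8) hξ (by norm_num) hx2 (by norm_num) heq (by norm_num [Finset.sum_range_succ, Nat.factorial])
  push_cast at hb2 ⊢
  norm_num at hb2 ⊢
  linarith

lemma case_6 (k : ℕ) (hk : 3 ≤ k) (ξ : ℝ) (hξ : 0 < ξ)
    (heq : (k : ℝ) * ((6:ℕ):ℝ) = ξ * Q ξ 6 / Q ξ (6+1)) :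
    (k : ℝ) * ((6:ℕ):ℝ) - 0.36 < ξ := by
  have hk3 : (3:ℝ) ≤ (k:ℝ) := by exact_mod_cast hk
  have hb0 := stage k 6 1 ξ (1/7) 0 hξ le_rfl hξ.le (by norm_num) heq (by norm_num [Finset.sum_range_succ, Nat.factorial])
  have hx1 : ((11):ℝ) ≤ ξ := by push_cast at hb0; norm_num at hb0; linarith
  have hb1 := stage k 6 14 ξ (101/50) (11) hξ (by norm_num) hx1 (by norm_num) heq (by norm_num [Finset.sum_range_succ, Nat.factorial])
  have hx2 : ((1768/101):ℝ) ≤ ξ := by push_cast at hb1; norm_num at hb1; linarith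
  have hb2 := stage k 6 5 ξ (14/5) (1768/101) hξ (by norm_num) hx2 (by norm_num) heq (by norm_num [Finset.sum_range_succ, Nat.factorial])
  push_cast at hb2 ⊢
  norm_num at hb2 ⊢
  linarith

lemma case_7 (k : ℕ) (hk : 3 ≤ k) (ξ : ℝ) (hξ : 0 < ξ)
    (heq : (k : ℝ) * ((7:ℕ):ℝ) = ξ * Q ξ 7 / Q ξ (7+1)) :
    (k : ℝ) * ((7:ℕ):ℝ) - 0.36 < ξ := by
  have hk3 : (3:ℝ) ≤ (k:ℝ) := by exact_mod_cast hk
  have hb0 := stage k 7 1 ξ (1/8) 0 hξ le_rfl hξ.le (by norm_num) heq (by norm_num [Finset.sum_range_succ, Nat.factorial])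
  have hx1 : ((13):ℝ) ≤ ξ := by push_cast at hb0; norm_num at hb0; linarith
  have hb1 := stage k 7 16 ξ (257/100) (13) hξ (by norm_num) hx1 (by norm_num) heq (by norm_num [Finset.sum_range_succ, Nat.factorial])
  have hx2 : ((5297/257):ℝ) ≤ ξ := by push_cast at hb1; norm_num at hb1; linarith
  have hb2 := stage k 7 5 ξ (14/5) (5297/257) hξ (by norm_num) hx2 (by norm_num) heq (by norm_num [Finset.sum_range_succ, Nat.factorial])
  push_cast at hb2 ⊢
  norm_num at hb2 ⊢
  linarith

lemma case_8 (k : ℕ) (hk : 3 ≤ k) (ξ : ℝ) (hξ : 0 < ξ)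
    (heq : (k : ℝ) * ((8:ℕ):ℝ) = ξ * Q ξ 8 / Q ξ (8+1)) :
    (k : ℝ) * ((8:ℕ):ℝ) - 0.36 < ξ := by
  have hk3 : (3:ℝ) ≤ (k:ℝ) := by exact_mod_cast hk
  have hb0 := stage k 8 1 ξ (1/9) 0 hξ le_rfl hξ.le (by norm_num) heq (by norm_num [Finset.sum_range_succ, Nat.factorial])
  have hx1 : ((15):ℝ) ≤ ξ := by push_cast at hb0; norm_num at hb0; linarith
  have hb1 := stage k 8 11 ξ (14/5) (15) hξ (by norm_num) hx1 (by norm_num) heq (by norm_num [Finset.sum_range_succ, Nat.factorial])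
  push_cast at hb1 ⊢
  norm_num at hb1 ⊢
  linarith

lemma case_9 (k : ℕ) (hk : 3 ≤ k) (ξ : ℝ) (hξ : 0 < ξ)
    (heq : (k : ℝ) * ((9:ℕ):ℝ) = ξ * Q ξ 9 / Q ξ (9+1)) :
    (k : ℝ) * ((9:ℕ):ℝ) - 0.36 < ξ := by
  have hk3 : (3:ℝ) ≤ (k:ℝ) := by exact_mod_cast hk
  have hb0 := stage k 9 1 ξ (1/10) 0 hξ le_rfl hξ.le (by norm_num) heq (by norm_num [Finset.sum_range_succ, Nat.factorial])
  have hx1 : ((17):ℝ) ≤ ξ := by push_cast at hb0; norm_num at hb0; linarith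
  have hb1 := stage k 9 10 ξ (14/5) (17) hξ (by norm_num) hx1 (by norm_num) heq (by norm_num [Finset.sum_range_succ, Nat.factorial])
  push_cast at hb1 ⊢
  norm_num at hb1 ⊢
  linarith

lemma case_10 (k : ℕ) (hk : 3 ≤ k) (ξ : ℝ) (hξ : 0 < ξ)
    (heq : (k : ℝ) * ((10:ℕ):ℝ) = ξ * Q ξ 10 / Q ξ (10+1)) :
    (k : ℝ) * ((10:ℕ):ℝ) - 0.36 < ξ := by
  have hk3 : (3:ℝ) ≤ (k:ℝ) := by exact_mod_cast hk
  have hb0 := stage k 10 1 ξ (1/11) 0 hξ le_rfl hξ.le (by norm_num) heq (by norm_num [Finset.sum_range_succ, Nat.factorial])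
  have hx1 : ((19):ℝ) ≤ ξ := by push_cast at hb0; norm_num at hb0; linarith
  have hb1 := stage k 10 9 ξ (14/5) (19) hξ (by norm_num) hx1 (by norm_num) heq (by norm_num [Finset.sum_range_succ, Nat.factorial])
  push_cast at hb1 ⊢
  norm_num at hb1 ⊢
  linarith

lemma case_11 (k : ℕ) (hk : 3 ≤ k) (ξ : ℝ) (hξ : 0 < ξ)
    (heq : (k : ℝ) * ((11:ℕ):ℝ) = ξ * Q ξ 11 / Q ξ (11+1)) :
    (k : ℝ) * ((11:ℕ):ℝ) - 0.36 < ξ := by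
  have hk3 : (3:ℝ) ≤ (k:ℝ) := by exact_mod_cast hk
  have hb0 := stage k 11 1 ξ (1/12) 0 hξ le_rfl hξ.le (by norm_num) heq (by norm_num [Finset.sum_range_succ, Nat.factorial])
  have hx1 : ((21):ℝ) ≤ ξ := by push_cast at hb0; norm_num at hb0; linarith
  have hb1 := stage k 11 9 ξ (14/5) (21) hξ (by norm_num) hx1 (by norm_num) heq (by norm_num [Finset.sum_range_succ, Nat.factorial])
  push_cast at hb1 ⊢
  norm_num at hb1 ⊢
  linarith

lemma case_12 (k : ℕ) (hk : 3 ≤ k) (ξ : ℝ) (hξ : 0 < ξ)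
    (heq : (k : ℝ) * ((12:ℕ):ℝ) = ξ * Q ξ 12 / Q ξ (12+1)) :
    (k : ℝ) * ((12:ℕ):ℝ) - 0.36 < ξ := by
  have hk3 : (3:ℝ) ≤ (k:ℝ) := by exact_mod_cast hk
  have hb0 := stage k 12 1 ξ (1/13) 0 hξ le_rfl hξ.le (by norm_num) heq (by norm_num [Finset.sum_range_succ, Nat.factorial])
  have hx1 : ((23):ℝ) ≤ ξ := by push_cast at hb0; norm_num at hb0; linarith
  have hb1 := stage k 12 9 ξ (14/5) (23) hξ (by norm_num) hx1 (by norm_num) heq (by norm_num [Finset.sum_range_succ, Nat.factorial])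
  push_cast at hb1 ⊢
  norm_num at hb1 ⊢
  linarith

lemma case_13 (k : ℕ) (hk : 3 ≤ k) (ξ : ℝ) (hξ : 0 < ξ)
    (heq : (k : ℝ) * ((13:ℕ):ℝ) = ξ * Q ξ 13 / Q ξ (13+1)) :
    (k : ℝ) * ((13:ℕ):ℝ) - 0.36 < ξ := by
  have hk3 : (3:ℝ) ≤ (k:ℝ) := by exact_mod_cast hk
  have hb0 := stage k 13 1 ξ (1/14) 0 hξ le_rfl hξ.le (by norm_num) heq (by norm_num [Finset.sum_range_succ, Nat.factorial])
  have hx1 : ((25):ℝ) ≤ ξ := by push_cast at hb0; norm_num at hb0; linarith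
  have hb1 := stage k 13 8 ξ (14/5) (25) hξ (by norm_num) hx1 (by norm_num) heq (by norm_num [Finset.sum_range_succ, Nat.factorial])
  push_cast at hb1 ⊢
  norm_num at hb1 ⊢
  linarith

lemma case_14 (k : ℕ) (hk : 3 ≤ k) (ξ : ℝ) (hξ : 0 < ξ)
    (heq : (k : ℝ) * ((14:ℕ):ℝ) = ξ * Q ξ 14 / Q ξ (14+1)) :
    (k : ℝ) * ((14:ℕ):ℝ) - 0.36 < ξ := by
  have hk3 : (3:ℝ) ≤ (k:ℝ) := by exact_mod_cast hk
  have hb0 := stage k 14 1 ξ (1/15) 0 hξ le_rfl hξ.le (by norm_num) heq (by norm_num [Finset.sum_range_succ, Nat.factorial])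
  have hx1 : ((27):ℝ) ≤ ξ := by push_cast at hb0; norm_num at hb0; linarith
  have hb1 := stage k 14 8 ξ (14/5) (27) hξ (by norm_num) hx1 (by norm_num) heq (by norm_num [Finset.sum_range_succ, Nat.factorial])
  push_cast at hb1 ⊢
  norm_num at hb1 ⊢
  linarith

lemma case_15 (k : ℕ) (hk : 3 ≤ k) (ξ : ℝ) (hξ : 0 < ξ)
    (heq : (k : ℝ) * ((15:ℕ):ℝ) = ξ * Q ξ 15 / Q ξ (15+1)) :
    (k : ℝ) * ((15:ℕ):ℝ) - 0.36 < ξ := by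
  have hk3 : (3:ℝ) ≤ (k:ℝ) := by exact_mod_cast hk
  have hb0 := stage k 15 1 ξ (1/16) 0 hξ le_rfl hξ.le (by norm_num) heq (by norm_num [Finset.sum_range_succ, Nat.factorial])
  have hx1 : ((29):ℝ) ≤ ξ := by push_cast at hb0; norm_num at hb0; linarith
  have hb1 := stage k 15 8 ξ (14/5) (29) hξ (by norm_num) hx1 (by norm_num) heq (by norm_num [Finset.sum_range_succ, Nat.factorial])
  push_cast at hb1 ⊢
  norm_num at hb1 ⊢
  linarith

lemma case_16 (k : ℕ) (hk : 3 ≤ k) (ξ : ℝ) (hξ : 0 < ξ)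
    (heq : (k : ℝ) * ((16:ℕ):ℝ) = ξ * Q ξ 16 / Q ξ (16+1)) :
    (k : ℝ) * ((16:ℕ):ℝ) - 0.36 < ξ := by
  have hk3 : (3:ℝ) ≤ (k:ℝ) := by exact_mod_cast hk
  have hb0 := stage k 16 1 ξ (1/17) 0 hξ le_rfl hξ.le (by norm_num) heq (by norm_num [Finset.sum_range_succ, Nat.factorial])
  have hx1 : ((31):ℝ) ≤ ξ := by push_cast at hb0; norm_num at hb0; linarith
  have hb1 := stage k 16 8 ξ (14/5) (31) hξ (by norm_num) hx1 (by norm_num) heq (by norm_num [Finset.sum_range_succ, Nat.factorial])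
  push_cast at hb1 ⊢
  norm_num at hb1 ⊢
  linarith

lemma case_17 (k : ℕ) (hk : 3 ≤ k) (ξ : ℝ) (hξ : 0 < ξ)
    (heq : (k : ℝ) * ((17:ℕ):ℝ) = ξ * Q ξ 17 / Q ξ (17+1)) :
    (k : ℝ) * ((17:ℕ):ℝ) - 0.36 < ξ := by
  have hk3 : (3:ℝ) ≤ (k:ℝ) := by exact_mod_cast hk
  have hb0 := stage k 17 1 ξ (1/18) 0 hξ le_rfl hξ.le (by norm_num) heq (by norm_num [Finset.sum_range_succ, Nat.factorial])
  have hx1 : ((33):ℝ) ≤ ξ := by push_cast at hb0; norm_num at hb0; linarith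
  have hb1 := stage k 17 8 ξ (14/5) (33) hξ (by norm_num) hx1 (by norm_num) heq (by norm_num [Finset.sum_range_succ, Nat.factorial])
  push_cast at hb1 ⊢
  norm_num at hb1 ⊢
  linarith

/-- If `kℓ = ξ*·Q(ξ*,ℓ)/Q(ξ*,ℓ+1)` with `k ≥ 3` and `ℓ ≥ 2`, then
`kℓ − 0.36 < ξ* < kℓ`. -/
theorem xi_star_bounds (k ℓ : ℕ) (hk : 3 ≤ k) (hℓ : 2 ≤ ℓ) (ξ : ℝ) (hξ : 0 < ξ)
    (heq : (k : ℝ) * ℓ = ξ * Q ξ ℓ / Q ξ (ℓ + 1)) :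
    ξ < (k : ℝ) * ℓ ∧ (k : ℝ) * ℓ - 0.36 < ξ := by
  refine ⟨xi_lt k ℓ ξ hξ heq, ?_⟩
  rcases Nat.lt_or_ge ℓ 18 with hl | hl
  · interval_cases ℓ
    · exact case_2 k hk ξ hξ heq
    · exact case_3 k hk ξ hξ heq
    · exact case_4 k hk ξ hξ heq
    · exact case_5 k hk ξ hξ heq
    · exact case_6 k hk ξ hξ heq
    · exact case_7 k hk ξ hξ heq
    · exact case_8 k hk ξ hξ heq
    · exact case_9 k hk ξ hξ heq
    · exact case_10 k hk ξ hξ heq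
    · exact case_11 k hk ξ hξ heq
    · exact case_12 k hk ξ hξ heq
    · exact case_13 k hk ξ hξ heq
    · exact case_14 k hk ξ hξ heq
    · exact case_15 k hk ξ hξ heq
    · exact case_16 k hk ξ hξ heq
    · exact case_17 k hk ξ hξ heq
  · obtain ⟨m, rfl⟩ := Nat.exists_eq_add_of_le hl
    exact large_case k m hk ξ hξ heq
end

section
/- For integers k ≥ 3 and ℓ ≥ 2, let ξ* > 0 satisfy kℓ = ξ*·Q(ξ*,ℓ)/Q(ξ*,ℓ+1). Then ξ* > kℓ/2. -/
/-- Strict partial sum bound for `exp` at a positive argument. -/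
lemma sum_lt_exp_of_pos {x : ℝ} (hx : 0 < x) (n : ℕ) :
    ∑ i ∈ Finset.range n, x ^ i / (Nat.factorial i) < Real.exp x := by
  have h1 : ∑ i ∈ Finset.range n, x ^ i / (Nat.factorial i)
      < ∑ i ∈ Finset.range (n + 1), x ^ i / (Nat.factorial i) := by
    rw [Finset.sum_range_succ]
    have : 0 < x ^ n / (Nat.factorial n) := by positivity
    linarith
  exact h1.trans_le (Real.sum_le_exp_of_nonneg hx.le _)

/-- If `kℓ = ξ*·Q(ξ*,ℓ)/Q(ξ*,ℓ+1)` with `k ≥ 3` and `ℓ ≥ 2`, then `ξ* > kℓ/2`. -/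
theorem xi_star_gt_half (k ℓ : ℕ) (hk : 3 ≤ k) (hℓ : 2 ≤ ℓ) (ξ : ℝ) (hξ : 0 < ξ)
    (heq : (k : ℝ) * ℓ = ξ * Q ξ ℓ / Q ξ (ℓ + 1)) :
    (k : ℝ) * ℓ / 2 < ξ := by
  set t : ℝ := Real.exp (-ξ) * (ξ ^ ℓ / (Nat.factorial ℓ)) with ht
  have htpos : 0 < t := by positivity
  -- Q ξ ℓ = Q ξ (ℓ+1) + t
  have hsplit : Q ξ ℓ = Q ξ (ℓ + 1) + t := by
    simp only [Q, Finset.sum_range_succ, ht]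
    ring
  set A : ℝ := Q ξ (ℓ + 1) with hA
  -- lower bound: t * ξ / (ℓ+1) < A
  have hAlb : t * ξ / (ℓ + 1) < A := by
    have h := sum_lt_exp_of_pos hξ (ℓ + 2)
    have hexp : 0 < Real.exp (-ξ) := Real.exp_pos _
    have key : Real.exp (-ξ) * ∑ i ∈ Finset.range (ℓ + 2), ξ ^ i / (Nat.factorial i) < 1 := by
      rw [Real.exp_neg]
      rw [inv_mul_lt_one₀ (Real.exp_pos ξ)]
      exact h
    rw [Finset.sum_range_succ, mul_add] at key
    have hfact : (Nat.factorial (ℓ + 1) : ℝ) = (ℓ + 1) * Nat.factorial ℓ := by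
      push_cast [Nat.factorial_succ]; ring
    have hAeq : A = 1 - Real.exp (-ξ) * ∑ i ∈ Finset.range (ℓ + 1), ξ ^ i / (Nat.factorial i) := rfl
    have h2 : Real.exp (-ξ) * (ξ ^ (ℓ + 1) / (Nat.factorial (ℓ + 1))) < A := by
      rw [hAeq]; linarith
    have h3 : t * ξ / (ℓ + 1) = Real.exp (-ξ) * (ξ ^ (ℓ + 1) / (Nat.factorial (ℓ + 1))) := by
      rw [ht, hfact, pow_succ]
      have hℓ1 : ((ℓ : ℝ) + 1) ≠ 0 := by positivity
      have hf : (Nat.factorial ℓ : ℝ) ≠ 0 := by positivity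
      field_simp
    rw [h3]; exact h2
  have hApos : 0 < A := lt_trans (by positivity) hAlb
  -- rearrange heq:  kℓ * A = ξ * (A + t)
  have heq2 : (k : ℝ) * ℓ * A = ξ * (A + t) := by
    rw [hsplit] at heq
    field_simp at heq
    linarith
  -- from hAlb and heq2: (ℓ+1) * (A + t) > kℓ * t, hence A > (kℓ/(ℓ+1) - 1) t ≥ t
  have hklb : (6 : ℝ) ≤ (k : ℝ) * ℓ := by
    have : (3 : ℝ) ≤ k := by exact_mod_cast hk
    have h2 : (2 : ℝ) ≤ ℓ := by exact_mod_cast hℓ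
    nlinarith
  have hkl : 2 * ((ℓ : ℝ) + 1) ≤ (k : ℝ) * ℓ := by
    have : (3 : ℝ) ≤ k := by exact_mod_cast hk
    have h2 : (2 : ℝ) ≤ ℓ := by exact_mod_cast hℓ
    nlinarith
  -- ξ = kℓ A / (A + t), and from hAlb: ξ < A (ℓ+1) / t
  have hξeq : ξ * (A + t) = (k : ℝ) * ℓ * A := heq2.symm
  have hℓ1pos : (0 : ℝ) < (ℓ : ℝ) + 1 := by positivity
  -- t * ξ < A * (ℓ+1)
  have h4 : t * ξ < A * ((ℓ : ℝ) + 1) := by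
    rw [div_lt_iff₀ hℓ1pos] at hAlb; linarith
  -- multiply heq2 through: kℓ A t = ξ (A+t) t < A(ℓ+1)(A+t) => kℓ t < (ℓ+1)(A+t)
  have h5 : (k : ℝ) * ℓ * t < ((ℓ : ℝ) + 1) * (A + t) := by
    have h6 : (k : ℝ) * ℓ * A * t = ξ * (A + t) * t := by rw [heq2]
    have hApt' : 0 < A + t := by linarith
    have h7 : ξ * t * (A + t) < A * ((ℓ : ℝ) + 1) * (A + t) := by
      have := mul_lt_mul_of_pos_right h4 hApt'
      linarith [this]
    have hApt : 0 < A + t := by linarith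
    nlinarith
  -- hence t < A using kℓ ≥ 2(ℓ+1)
  have htA : t < A := by nlinarith
  -- conclude: ξ (A+t) = kℓ A > kℓ (A+t)/2
  have : (k : ℝ) * ℓ / 2 * (A + t) < ξ * (A + t) := by
    rw [hξeq]; nlinarith
  have hApt : 0 < A + t := by linarith
  exact lt_of_mul_lt_mul_right this hApt.le
end

section
/- Let ℓ ≥ 1 be an integer, Λ > 0, and for z > ℓ+1 let T_z be the unique solution of z = T·Q(T,ℓ)/Q(T,ℓ+1). Define I_Λ(z) = z(ln T_z − ln Λ) − T_z + Λ − ln Q(T_z, ℓ+1) + ln Q(Λ, ℓ+1). Then the derivative of I_Λ with respect to z equals ln T_z − ln Λ. -/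
open Real Finset

namespace RateAux

noncomputable def cc (m k : ℕ) : ℝ := (Nat.factorial m : ℝ) / (Nat.factorial (m + k))

lemma cc_pos (m k : ℕ) : 0 < cc m k := by
  exact div_pos (by positivity) (by positivity)

lemma cc_zero (m : ℕ) : cc m 0 = 1 := by
  simp only [cc, Nat.add_zero]
  exact div_self (by positivity)

lemma fact_mul_fact_le (m a b : ℕ) :
    Nat.factorial (m + a) * Nat.factorial (m + b) ≤ Nat.factorial m * Nat.factorial (m + a + b) := by
  induction a with
  | zero => simp [mul_comm]
  | succ a ih =>
    have h1 : Nat.factorial (m + (a+1)) = (m + a + 1) * Nat.factorial (m + a) := by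
      rw [show m + (a+1) = (m + a) + 1 by ring, Nat.factorial_succ]
    have h2 : Nat.factorial (m + (a+1) + b) = (m + a + b + 1) * Nat.factorial (m + a + b) := by
      rw [show m + (a+1) + b = (m + a + b) + 1 by ring, Nat.factorial_succ]
    rw [h1, h2, mul_assoc]
    calc (m + a + 1) * (Nat.factorial (m + a) * Nat.factorial (m + b))
        ≤ (m + a + 1) * (Nat.factorial m * Nat.factorial (m + a + b)) :=
          Nat.mul_le_mul_left _ ih
      _ ≤ (m + a + b + 1) * (Nat.factorial m * Nat.factorial (m + a + b)) :=
          Nat.mul_le_mul_right _ (by omega)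
      _ = Nat.factorial m * ((m + a + b + 1) * Nat.factorial (m + a + b)) := by ring

lemma cc_mul_cc (m a b : ℕ) : cc m (a + b) ≤ cc m a * cc m b := by
  rw [cc, cc, cc, div_mul_div_comm, div_le_div_iff₀ (by positivity) (by positivity)]
  have h : ((Nat.factorial (m+a) * Nat.factorial (m+b) : ℕ) : ℝ)
      ≤ ((Nat.factorial m * Nat.factorial (m + a + b) : ℕ) : ℝ) :=
    Nat.cast_le.mpr (fact_mul_fact_le m a b)
  push_cast at h
  have hm : (0:ℝ) < (Nat.factorial m : ℝ) := by positivity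
  rw [show m + (a + b) = m + a + b by ring]
  nlinarith [h, hm]

lemma cc_succ (m k : ℕ) : cc m k = (m + k + 1) * cc m (k + 1) := by
  rw [cc, cc, show m + (k+1) = (m+k) + 1 by ring, Nat.factorial_succ]
  have h : (Nat.factorial (m+k) : ℝ) ≠ 0 := by positivity
  field_simp
  push_cast; ring

lemma summable_cc (m : ℕ) (t : ℝ) (ht : 0 ≤ t) : Summable (fun k => cc m k * t ^ k) := by
  have hle : ∀ k, cc m k * t ^ k ≤ (Nat.factorial m : ℝ) * (t ^ k / Nat.factorial k) := by
    intro k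
    rw [cc, div_mul_eq_mul_div, mul_div_assoc]
    apply mul_le_mul_of_nonneg_left _ (by positivity)
    apply div_le_div_of_nonneg_left (by positivity) (by positivity)
    exact_mod_cast Nat.cast_le.mpr (Nat.factorial_le (Nat.le_add_left k m))
  exact Summable.of_nonneg_of_le (fun k => by unfold cc; positivity) hle
    ((Real.summable_pow_div_factorial t).mul_left _)

noncomputable def RR (m : ℕ) (t : ℝ) : ℝ := ∑' k, cc m (k + 1) * t ^ (k + 1)

lemma summable_shift (m : ℕ) (t : ℝ) (ht : 0 ≤ t) :
    Summable (fun k => cc m (k + 1) * t ^ (k + 1)) :=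
  (summable_nat_add_iff 1).mpr (summable_cc m t ht)

lemma RR_nonneg (m : ℕ) {t : ℝ} (ht : 0 ≤ t) : 0 ≤ RR m t :=
  tsum_nonneg (fun k => mul_nonneg (cc_pos m (k+1)).le (by positivity))

lemma key (m : ℕ) {t : ℝ} (ht : 0 < t) :
    t * RR m t + t < RR m t ^ 2 + (m + 1) * RR m t := by
  set a : ℕ → ℝ := fun k => cc m (k + 1) * t ^ (k + 1) with ha
  have hna : ∀ k, 0 ≤ a k := fun k => mul_nonneg (cc_pos m (k+1)).le (by positivity)
  have hsa : Summable a := summable_shift m t ht.le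
  have hnorm : Summable fun k => ‖a k‖ := by simpa [Real.norm_eq_abs] using hsa.abs
  have hsq : RR m t ^ 2 = ∑' n, ∑ k ∈ Finset.range (n+1), a k * a (n - k) := by
    rw [sq, RR, ← ha, tsum_mul_tsum_eq_tsum_sum_range_of_summable_norm hnorm hnorm]
  have hg1 : Summable (fun n => ∑ k ∈ Finset.range (n+1), a k * a (n - k)) :=
    (summable_norm_sum_mul_range_of_summable_norm hnorm hnorm).of_norm
  have hsa1 : Summable (fun n => a (n + 1)) := (summable_nat_add_iff 1).mpr hsa
  have hg2 : Summable (fun n => ((m:ℝ)+1) * a (n + 1)) := hsa1.mul_left _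
  have hf : Summable (fun n => t * a n) := hsa.mul_left t
  -- factorial cast facts
  have hfac1 : (Nat.factorial (m+1) : ℝ) = ((m:ℝ)+1) * Nat.factorial m := by
    rw [Nat.factorial_succ]; push_cast; ring
  have hc1 : cc m 1 * ((m:ℝ)+1) = 1 := by
    rw [cc, show m + 1 = m + 1 from rfl, hfac1]
    have : (Nat.factorial m : ℝ) ≠ 0 := by positivity
    field_simp
  -- termwise bound
  have hterm : ∀ n, t * a n ≤ (∑ k ∈ Finset.range (n+1), a k * a (n - k)) + ((m:ℝ)+1) * a (n + 1) := by
    intro n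
    have hlow : ∀ k ∈ Finset.range (n+1), cc m (n+2) * t ^ (n+2) ≤ a k * a (n - k) := by
      intro k hk
      have hk' : k ≤ n := Nat.lt_succ_iff.mp (Finset.mem_range.mp hk)
      have hidx : (k+1) + (n-k+1) = n + 2 := by omega
      have hpow : t ^ (k+1) * t ^ (n-k+1) = t ^ (n+2) := by
        rw [← pow_add, hidx]
      have hcc : cc m (n+2) ≤ cc m (k+1) * cc m (n-k+1) := by
        have := cc_mul_cc m (k+1) (n-k+1)
        rwa [hidx] at this
      calc cc m (n+2) * t ^ (n+2) ≤ (cc m (k+1) * cc m (n-k+1)) * t ^ (n+2) :=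
            mul_le_mul_of_nonneg_right hcc (by positivity)
        _ = a k * a (n - k) := by rw [ha]; dsimp only; rw [← hpow]; ring
    have hsum : ((n:ℝ)+1) * (cc m (n+2) * t ^ (n+2))
        ≤ ∑ k ∈ Finset.range (n+1), a k * a (n - k) := by
      calc ((n:ℝ)+1) * (cc m (n+2) * t ^ (n+2))
          = ∑ _k ∈ Finset.range (n+1), cc m (n+2) * t ^ (n+2) := by
            rw [Finset.sum_const, Finset.card_range]; push_cast; ring
        _ ≤ _ := Finset.sum_le_sum hlow
    have hccs : cc m (n+1) = ((m:ℝ) + (n:ℝ) + 2) * cc m (n+2) := by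
      have := cc_succ m (n+1)
      push_cast at this ⊢
      convert this using 2 <;> push_cast <;> ring
    have hta : t * a n = cc m (n+1) * t ^ (n+2) := by
      rw [ha]; dsimp only; rw [show n + 1 + 1 = n + 2 from rfl]; ring
    have hma : ((m:ℝ)+1) * a (n+1) = ((m:ℝ)+1) * cc m (n+2) * t ^ (n+2) := by
      rw [ha]; dsimp only; ring
    rw [hta, hma, hccs]
    nlinarith [hsum]
  -- strict at 0
  have hfac2 : (Nat.factorial (m+2) : ℝ) = ((m:ℝ)+2) * (((m:ℝ)+1) * Nat.factorial m) := by
    have h : Nat.factorial (m+2) = (m+2) * ((m+1) * Nat.factorial m) := by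
      rw [Nat.factorial_succ, Nat.factorial_succ]
    rw [h]; push_cast; ring
  have hc2 : cc m 2 * (((m:ℝ)+1) * ((m:ℝ)+2)) = 1 := by
    rw [cc, hfac2]
    have : (Nat.factorial m : ℝ) ≠ 0 := by positivity
    field_simp
  have hm1 : (0:ℝ) < (m:ℝ) + 1 := by positivity
  have hm2 : (0:ℝ) < (m:ℝ) + 2 := by positivity
  have hstrict : t * a 0 < (∑ k ∈ Finset.range (0+1), a k * a (0 - k)) + ((m:ℝ)+1) * a (0+1) := by
    rw [Finset.sum_range_one]
    have h0 : a 0 = cc m 1 * t := by rw [ha]; dsimp only; rw [pow_one]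
    have h1 : a 1 = cc m 2 * t ^ 2 := by rw [ha]
    have hcc1 : cc m 1 = ((m:ℝ)+1)⁻¹ := eq_inv_of_mul_eq_one_left hc1
    have hcc2 : cc m 2 = (((m:ℝ)+1) * ((m:ℝ)+2))⁻¹ := eq_inv_of_mul_eq_one_left hc2
    have hkey : ((m:ℝ)+1)⁻¹ < ((m:ℝ)+1)⁻¹ * ((m:ℝ)+1)⁻¹ + ((m:ℝ)+2)⁻¹ := by
      rw [← sub_pos]
      have h2 : ((m:ℝ)+1)⁻¹ * ((m:ℝ)+1)⁻¹ + ((m:ℝ)+2)⁻¹ - ((m:ℝ)+1)⁻¹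
          = (((m:ℝ)+1) * (((m:ℝ)+1) * ((m:ℝ)+2)))⁻¹ := by
        field_simp
        ring
      rw [h2]
      positivity
    have e1 : ((m:ℝ)+1) * ((((m:ℝ)+1) * ((m:ℝ)+2))⁻¹) = ((m:ℝ)+2)⁻¹ := by
      rw [mul_inv, ← mul_assoc, mul_inv_cancel₀ hm1.ne', one_mul]
    rw [h0, h1, hcc1, hcc2]
    calc t * (((m:ℝ)+1)⁻¹ * t) = ((m:ℝ)+1)⁻¹ * t^2 := by ring
      _ < (((m:ℝ)+1)⁻¹ * ((m:ℝ)+1)⁻¹ + ((m:ℝ)+2)⁻¹) * t^2 :=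
          mul_lt_mul_of_pos_right hkey (by positivity)
      _ = ((m:ℝ)+1)⁻¹ * t * (((m:ℝ)+1)⁻¹ * t)
          + ((m:ℝ)+1) * ((((m:ℝ)+1) * ((m:ℝ)+2))⁻¹ * t^2) := by rw [← e1]; ring
  -- assemble
  have hsum_g : Summable (fun n => (∑ k ∈ Finset.range (n+1), a k * a (n - k)) + ((m:ℝ)+1) * a (n+1)) :=
    hg1.add hg2
  have hlt : ∑' n, t * a n < ∑' n, ((∑ k ∈ Finset.range (n+1), a k * a (n - k)) + ((m:ℝ)+1) * a (n+1)) :=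
    Summable.tsum_lt_tsum_of_nonneg (i := 0) (fun n => mul_nonneg ht.le (hna n)) hterm hstrict hsum_g
  have hmr : ((m:ℝ)+1) * RR m t = t + ∑' n, ((m:ℝ)+1) * a (n+1) := by
    have := Summable.sum_add_tsum_nat_add (f := fun n => ((m:ℝ)+1) * a n) 1 (hsa.mul_left _)
    rw [RR, ← ha, ← tsum_mul_left, ← this, Finset.sum_range_one]
    have : ((m:ℝ)+1) * a 0 = t := by
      rw [ha]; dsimp only; rw [pow_one, ← mul_assoc, mul_comm ((m:ℝ)+1) (cc m 1), hc1, one_mul]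
    rw [this]
  have htr : t * RR m t = ∑' n, t * a n := by
    rw [RR, ← ha, ← tsum_mul_left]
  calc t * RR m t + t = (∑' n, t * a n) + t := by rw [htr]
    _ < (∑' n, ((∑ k ∈ Finset.range (n+1), a k * a (n - k)) + ((m:ℝ)+1) * a (n+1))) + t := by
        linarith [hlt]
    _ = RR m t ^ 2 + ((m:ℝ) + 1) * RR m t := by
        rw [Summable.tsum_add hg1 hg2, hsq, hmr]; ring


lemma Q_succ (x : ℝ) (m : ℕ) :
    Q x (m + 1) = Q x m - Real.exp (-x) * (x ^ m / Nat.factorial m) := by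
  rw [Q, Q, Finset.sum_range_succ, mul_add]
  ring

lemma Q_eq_tail (x : ℝ) (m : ℕ) :
    Q x m = Real.exp (-x) * ∑' j, x ^ (j + m) / Nat.factorial (j + m) := by
  have hexp : Real.exp x = ∑' n, x ^ n / Nat.factorial n := by
    rw [Real.exp_eq_exp_ℝ, NormedSpace.exp_eq_tsum_div]
  have hsum := Real.summable_pow_div_factorial x
  have hsplit := Summable.sum_add_tsum_nat_add (f := fun n => x ^ n / Nat.factorial n) m hsum
  have hS : ∑ j ∈ Finset.range m, x ^ j / Nat.factorial j
      = Real.exp x - ∑' j, x ^ (j + m) / Nat.factorial (j + m) := by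
    rw [hexp]
    simpa using (eq_sub_of_add_eq hsplit)
  rw [Q, hS, mul_sub]
  have hxx : Real.exp (-x) * Real.exp x = 1 := by rw [← Real.exp_add]; simp
  rw [hxx]
  ring

lemma Q_pos {x : ℝ} (hx : 0 < x) (m : ℕ) : 0 < Q x m := by
  rw [Q_eq_tail]
  apply mul_pos (Real.exp_pos _)
  apply Summable.tsum_pos ((summable_nat_add_iff m).mpr (Real.summable_pow_div_factorial x))
    (fun j => by positivity) 0
  positivity

lemma Q_eq_RR (t : ℝ) (m : ℕ) :
    Q t (m + 1) = Real.exp (-t) * (t ^ m / Nat.factorial m) * RR m t := by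
  rw [Q_eq_tail, RR, mul_assoc]
  congr 1
  rw [← tsum_mul_left]
  apply tsum_congr
  intro j
  rw [cc]
  have h1 : (Nat.factorial m : ℝ) ≠ 0 := by positivity
  have h2 : (Nat.factorial (m + (j+1)) : ℝ) ≠ 0 := by positivity
  rw [show j + (m + 1) = m + (j + 1) by ring, show t ^ (m + (j+1)) = t ^ m * t ^ (j+1) from pow_add t m (j+1)]
  field_simp

lemma hasDerivAt_Q (m : ℕ) (x : ℝ) :
    HasDerivAt (fun x => Q x (m + 1)) (Real.exp (-x) * (x ^ m / Nat.factorial m)) x := by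
  induction m with
  | zero =>
    have h : (fun x => Q x 1) = fun x => 1 - Real.exp (-x) := by
      funext y; rw [Q]; simp
    rw [h]
    have h1 : HasDerivAt (fun x : ℝ => Real.exp (-x)) (-Real.exp (-x)) x := by
      simpa using (hasDerivAt_neg x).exp
    simpa using (h1.const_sub 1)
  | succ m ih =>
    have h : (fun x => Q x (m + 2)) =
        fun x => Q x (m + 1) - Real.exp (-x) * (x ^ (m+1) / Nat.factorial (m+1)) := by
      funext y; exact Q_succ y (m+1)
    rw [h]
    have hexp : HasDerivAt (fun x : ℝ => Real.exp (-x)) (-Real.exp (-x)) x := by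
      simpa using (hasDerivAt_neg x).exp
    have hpow : HasDerivAt (fun x : ℝ => x ^ (m+1) / (Nat.factorial (m+1) : ℝ))
        (((m:ℝ)+1) * x ^ m / (Nat.factorial (m+1) : ℝ)) x := by
      simpa using (hasDerivAt_pow (m+1) x).div_const (Nat.factorial (m+1) : ℝ)
    have hmul := hexp.mul hpow
    have := ih.sub hmul
    refine this.congr_deriv ?_
    have hfac : (Nat.factorial (m+1) : ℝ) = ((m:ℝ)+1) * Nat.factorial m := by
      rw [Nat.factorial_succ]; push_cast; ring
    rw [hfac]
    have h1 : (Nat.factorial m : ℝ) ≠ 0 := by positivity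
    have h2 : ((m:ℝ) + 1) ≠ 0 := by positivity
    field_simp
    ring


noncomputable def Nder (m : ℕ) (t : ℝ) : ℝ :=
  (Q t (m+1) + t * (Real.exp (-t) * (t ^ m / Nat.factorial m))) * Q t (m+2)
    - t * Q t (m+1) * (Real.exp (-t) * (t ^ (m+1) / Nat.factorial (m+1)))

lemma hasDerivAt_ff (m : ℕ) {t : ℝ} (ht : 0 < t) :
    HasDerivAt (fun t => t * Q t (m+1) / Q t (m+2)) (Nder m t / (Q t (m+2))^2) t := by
  have h1 : HasDerivAt (fun t => t * Q t (m+1))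
      (1 * Q t (m+1) + t * (Real.exp (-t) * (t ^ m / Nat.factorial m))) t :=
    (hasDerivAt_id t).mul (hasDerivAt_Q m t)
  have h2 := hasDerivAt_Q (m+1) t
  have h3 := h1.div h2 (Q_pos ht (m+2)).ne'
  refine h3.congr_deriv ?_
  rw [Nder]; ring

lemma Nder_pos (m : ℕ) {t : ℝ} (ht : 0 < t) : 0 < Nder m t := by
  set b := Real.exp (-t) * (t ^ (m+1) / Nat.factorial (m+1)) with hb
  have hbpos : 0 < b := by rw [hb]; positivity
  have hB : Q t (m+2) = b * RR (m+1) t := by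
    rw [Q_eq_RR t (m+1), hb]
  have hA' : Q t (m+1) = b * RR (m+1) t + b := by
    have := Q_succ t (m+1)
    rw [← hb] at this
    rw [← hB]
    linarith [this]
  have hfac : (Nat.factorial (m+1) : ℝ) = ((m:ℝ)+1) * Nat.factorial m := by
    rw [Nat.factorial_succ]; push_cast; ring
  have hta : t * (Real.exp (-t) * (t ^ m / Nat.factorial m)) = ((m:ℝ)+1) * b := by
    rw [hb, hfac]
    have h1 : (Nat.factorial m : ℝ) ≠ 0 := by positivity
    have h2 : ((m:ℝ) + 1) ≠ 0 := by positivity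
    field_simp
    ring
  have hexp : Nder m t = b*b*((RR (m+1) t)^2 + ((m:ℝ)+2)*RR (m+1) t - (t*RR (m+1) t + t)) := by
    rw [Nder, hA', hB, hta]; ring
  rw [hexp]
  have hkey := key (m+1) ht
  push_cast at hkey
  nlinarith [mul_pos hbpos hbpos, hkey]

lemma ff_strictMono (m : ℕ) : StrictMonoOn (fun t => t * Q t (m+1) / Q t (m+2)) (Set.Ioi 0) := by
  apply strictMonoOn_of_deriv_pos (convex_Ioi 0)
  · intro t ht
    exact ((hasDerivAt_ff m ht).differentiableAt.continuousAt).continuousWithinAt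
  · intro t ht
    rw [interior_Ioi] at ht
    rw [(hasDerivAt_ff m ht).deriv]
    exact div_pos (Nder_pos m ht) (pow_pos (Q_pos ht (m+2)) 2)

end RateAux

/-- If `T z` solves `z = T·Q(T,ℓ)/Q(T,ℓ+1)` for every `z > ℓ+1`, then the rate function
`I_Λ(z) = z(ln T_z − ln Λ) − T_z + Λ − ln Q(T_z,ℓ+1) + ln Q(Λ,ℓ+1)` has derivative
`ln T_z − ln Λ` at every `z > ℓ+1`. -/
theorem rate_function_derivative (ℓ : ℕ) (hℓ : 1 ≤ ℓ) (Λ : ℝ) (hΛ : 0 < Λ)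
    (T : ℝ → ℝ)
    (hT : ∀ z : ℝ, (ℓ : ℝ) + 1 < z → 0 < T z ∧ z = T z * Q (T z) ℓ / Q (T z) (ℓ + 1)) :
    ∀ z : ℝ, (ℓ : ℝ) + 1 < z →
      HasDerivAt
        (fun z => z * (Real.log (T z) - Real.log Λ) - T z + Λ
          - Real.log (Q (T z) (ℓ + 1)) + Real.log (Q Λ (ℓ + 1)))
        (Real.log (T z) - Real.log Λ) z := by
  obtain ⟨m, rfl⟩ : ∃ m, ℓ = m + 1 := ⟨ℓ - 1, by omega⟩
  intro z hz
  set f : ℝ → ℝ := fun t => t * Q t (m+1) / Q t (m+2) with hfdef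
  obtain ⟨ht₀, hzeq⟩ := hT z hz
  set t₀ := T z with ht₀def
  have hfz : f t₀ = z := by rw [hfdef]; exact hzeq.symm
  have hmono := RateAux.ff_strictMono m
  -- continuity of T at z
  have hcont : ContinuousAt T z := by
    rw [Metric.continuousAt_iff]
    intro ε hε
    set ε' := min ε (t₀/2) with hε'def
    have hε'pos : 0 < ε' := lt_min hε (by linarith)
    have hε'le : ε' ≤ t₀/2 := min_le_right _ _
    have hε'le' : ε' ≤ ε := min_le_left _ _
    have hlo : (0:ℝ) < t₀ - ε' := by linarith
    have hmem1 : t₀ - ε' ∈ Set.Ioi (0:ℝ) := hlo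
    have hmem0 : t₀ ∈ Set.Ioi (0:ℝ) := ht₀
    have hmem2 : t₀ + ε' ∈ Set.Ioi (0:ℝ) := by
      simp only [Set.mem_Ioi]; linarith
    have hu1 : f (t₀ - ε') < z := by
      rw [← hfz]; exact hmono hmem1 hmem0 (by linarith)
    have hu2 : z < f (t₀ + ε') := by
      rw [← hfz]; exact hmono hmem0 hmem2 (by linarith)
    refine ⟨min (min (z - f (t₀ - ε')) (f (t₀ + ε') - z)) (z - (((m+1:ℕ) : ℝ) + 1)),
      lt_min (lt_min (by linarith) (by linarith)) (by linarith), ?_⟩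
    intro x hx
    rw [Real.dist_eq] at hx ⊢
    have hx1 : |x - z| < z - (((m+1:ℕ) : ℝ) + 1) := hx.trans_le (min_le_right _ _)
    have hx2 : |x - z| < z - f (t₀ - ε') := hx.trans_le ((min_le_left _ _).trans (min_le_left _ _))
    have hx3 : |x - z| < f (t₀ + ε') - z := hx.trans_le ((min_le_left _ _).trans (min_le_right _ _))
    rw [abs_lt] at hx1 hx2 hx3
    have hxgt : (((m+1:ℕ) : ℝ) + 1) < x := by linarith [hx1.1]
    obtain ⟨hTx, hxeq⟩ := hT x hxgt
    have hfx : f (T x) = x := hxeq.symm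
    have hmemx : T x ∈ Set.Ioi (0:ℝ) := hTx
    have hlt1 : t₀ - ε' < T x := by
      by_contra hcon
      push_neg at hcon
      have h' : f (T x) ≤ f (t₀ - ε') := hmono.monotoneOn hmemx hmem1 hcon
      rw [hfx] at h'
      linarith [hx2.1]
    have hlt2 : T x < t₀ + ε' := by
      by_contra hcon
      push_neg at hcon
      have h' : f (t₀ + ε') ≤ f (T x) := hmono.monotoneOn hmem2 hmemx hcon
      rw [hfx] at h'
      linarith [hx3.2]
    rw [abs_lt]
    constructor <;> [linarith; linarith]
  -- differentiability of T at z
  have hev : ∀ᶠ y in nhds z, f (T y) = y := by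
    filter_upwards [isOpen_Ioi.mem_nhds hz] with y hy
    exact (hT y hy).2.symm
  have hderiv := RateAux.hasDerivAt_ff m ht₀
  have hpos : 0 < RateAux.Nder m t₀ / (Q t₀ (m+2))^2 :=
    div_pos (RateAux.Nder_pos m ht₀) (pow_pos (RateAux.Q_pos ht₀ _) 2)
  have hT' : HasDerivAt T (RateAux.Nder m t₀ / (Q t₀ (m+2))^2)⁻¹ z :=
    HasDerivAt.of_local_left_inverse hcont hderiv hpos.ne' hev
  set d := (RateAux.Nder m t₀ / (Q t₀ (m+2))^2)⁻¹ with hddef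
  -- assemble the derivative
  have hlogT : HasDerivAt (fun z => Real.log (T z)) (d / t₀) z := hT'.log ht₀.ne'
  have h1 : HasDerivAt (fun z => z * (Real.log (T z) - Real.log Λ))
      (1 * (Real.log t₀ - Real.log Λ) + z * (d / t₀)) z :=
    (hasDerivAt_id z).mul (hlogT.sub_const _)
  have hQb : HasDerivAt (fun z => Q (T z) (m+2))
      (Real.exp (-t₀) * (t₀ ^ (m+1) / Nat.factorial (m+1)) * d) z :=
    (RateAux.hasDerivAt_Q (m+1) t₀).comp z hT'
  have hlogQ : HasDerivAt (fun z => Real.log (Q (T z) (m+2)))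
      (Real.exp (-t₀) * (t₀ ^ (m+1) / Nat.factorial (m+1)) * d / Q t₀ (m+2)) z :=
    hQb.log (RateAux.Q_pos ht₀ _).ne'
  have full := (((h1.sub hT').add_const Λ).sub hlogQ).add_const (Real.log (Q Λ (m+2)))
  -- the correction terms vanish
  have hBpos := RateAux.Q_pos ht₀ (m+2)
  have hA : Q t₀ (m+1) = Q t₀ (m+2) + Real.exp (-t₀) * (t₀^(m+1)/Nat.factorial (m+1)) := by
    have := RateAux.Q_succ t₀ (m+1)
    linarith
  have hzB : z * Q t₀ (m+2) = t₀ * Q t₀ (m+1) := by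
    rw [hzeq]
    field_simp
  have h1' : t₀ ≠ 0 := ht₀.ne'
  have h2' : Q t₀ (m+2) ≠ 0 := hBpos.ne'
  have hbr : z / t₀ - 1
      - Real.exp (-t₀) * (t₀ ^ (m+1) / Nat.factorial (m+1)) / Q t₀ (m+2) = 0 := by
    have hq : z / t₀ = Q t₀ (m+1) / Q t₀ (m+2) := by
      rw [hzeq]
      field_simp
    rw [hq, hA]
    field_simp
    ring
  refine full.congr_deriv ?_
  linear_combination d * hbr
end
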